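/- Let γ : (0,∞) → ℝ² be the curve γ(t) = (t cos(e^{1/t}), t sin(e^{1/t})), and let Q(t) = cross(γ′(t), γ′′(t))/‖γ′(t)‖³ with cross(u,w) = u₁w₂ − u₂w₁. Then the function ℝ → ℝ defined by t ↦ Q′(t) − 1/t² for t > 0 and by 0 for t ≤ 0 is infinitely differentiable. -/

import Mathlib

/-- The spiral `γ(t) = (t cos(e^{1/t}), t sin(e^{1/t}))`. -/
noncomputable def spiral : ℝ → ℝ × ℝ :=
  fun t => (t * Real.cos (Real.exp (1 / t)), t * Real.sin (Real.exp (1 / t)))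

/-- The planar cross product `cross(u, w) = u₁w₂ - u₂w₁`. -/
def planarCross (u w : ℝ × ℝ) : ℝ := u.1 * w.2 - u.2 * w.1

/-- The Euclidean norm on `ℝ²`. -/
noncomputable def euclNorm (u : ℝ × ℝ) : ℝ := Real.sqrt (u.1 ^ 2 + u.2 ^ 2)

/-- The signed curvature density `Q(t) = cross(γ'(t), γ''(t)) / ‖γ'(t)‖³`. -/
noncomputable def spiralQ (t : ℝ) : ℝ :=
  planarCross (deriv spiral t) (deriv (deriv spiral) t) / (euclNorm (deriv spiral t)) ^ 3

open Real

open scoped ContDiff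


noncomputable def spiralD1 (t : ℝ) : ℝ × ℝ :=
  (Real.cos (Real.exp (1/t)) + Real.exp (1/t) * Real.sin (Real.exp (1/t)) / t,
   Real.sin (Real.exp (1/t)) - Real.exp (1/t) * Real.cos (Real.exp (1/t)) / t)

noncomputable def spiralD2 (t : ℝ) : ℝ × ℝ :=
  (-(Real.exp (1/t) * (Real.sin (Real.exp (1/t)) + Real.exp (1/t) * Real.cos (Real.exp (1/t)))) / t^3,
   Real.exp (1/t) * (Real.cos (Real.exp (1/t)) - Real.exp (1/t) * Real.sin (Real.exp (1/t))) / t^3)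

lemma hasDerivAt_E {t : ℝ} (ht : t ≠ 0) :
    HasDerivAt (fun s => Real.exp (1/s)) (-(Real.exp (1/t) / t^2)) t := by
  have h1 : HasDerivAt (fun s : ℝ => 1/s) (-(t^2)⁻¹) t := by
    simpa [one_div] using hasDerivAt_inv ht
  have h2 := (Real.hasDerivAt_exp (1/t)).comp t h1
  refine h2.congr_deriv ?_
  ring

lemma spiral_hasDerivAt {t : ℝ} (ht : t ≠ 0) : HasDerivAt spiral (spiralD1 t) t := by
  have hE := hasDerivAt_E ht
  have hc : HasDerivAt (fun s => Real.cos (Real.exp (1/s)))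
      (-Real.sin (Real.exp (1/t)) * (-(Real.exp (1/t) / t^2))) t :=
    (Real.hasDerivAt_cos _).comp t hE
  have hs : HasDerivAt (fun s => Real.sin (Real.exp (1/s)))
      (Real.cos (Real.exp (1/t)) * (-(Real.exp (1/t) / t^2))) t :=
    (Real.hasDerivAt_sin _).comp t hE
  have h1 := (hasDerivAt_id t).mul hc
  have h2 := (hasDerivAt_id t).mul hs
  have := h1.prodMk h2
  refine this.congr_deriv ?_
  simp only [spiralD1, id_eq, Prod.mk.injEq]
  constructor <;> (field_simp <;> ring)

lemma spiralD1_hasDerivAt {t : ℝ} (ht : t ≠ 0) : HasDerivAt spiralD1 (spiralD2 t) t := by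
  have hE := hasDerivAt_E ht
  have hc : HasDerivAt (fun s => Real.cos (Real.exp (1/s)))
      (-Real.sin (Real.exp (1/t)) * (-(Real.exp (1/t) / t^2))) t :=
    (Real.hasDerivAt_cos _).comp t hE
  have hs : HasDerivAt (fun s => Real.sin (Real.exp (1/s)))
      (Real.cos (Real.exp (1/t)) * (-(Real.exp (1/t) / t^2))) t :=
    (Real.hasDerivAt_sin _).comp t hE
  have h1 := hc.add (((hE.mul hs).div (hasDerivAt_id t) ht))
  have h2 := hs.sub (((hE.mul hc).div (hasDerivAt_id t) ht))
  have := h1.prodMk h2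
  refine this.congr_deriv ?_
  simp only [spiralD2, id_eq, Prod.mk.injEq, Pi.mul_apply]
  constructor <;> (field_simp <;> ring)

lemma deriv_spiral {t : ℝ} (ht : t ≠ 0) : deriv spiral t = spiralD1 t :=
  (spiral_hasDerivAt ht).deriv

lemma deriv2_spiral {t : ℝ} (ht : t ≠ 0) : deriv (deriv spiral) t = spiralD2 t := by
  have hev : deriv spiral =ᶠ[nhds t] spiralD1 := by
    filter_upwards [isOpen_compl_singleton.mem_nhds ht] with s hs
    exact deriv_spiral hs
  rw [hev.deriv_eq]
  exact (spiralD1_hasDerivAt ht).deriv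

lemma cross_eq {t : ℝ} (ht : t ≠ 0) :
    planarCross (spiralD1 t) (spiralD2 t)
      = Real.exp (1/t) * (t - Real.exp (1/t)^2) / t^4 := by
  have hsc := Real.sin_sq_add_cos_sq (Real.exp (1/t))
  simp only [planarCross, spiralD1, spiralD2]
  field_simp
  linear_combination (t - Real.exp (1/t)^2) * hsc

lemma normsq_eq {t : ℝ} (ht : t ≠ 0) :
    (spiralD1 t).1 ^ 2 + (spiralD1 t).2 ^ 2 = 1 + Real.exp (1/t)^2 / t^2 := by
  have hsc := Real.sin_sq_add_cos_sq (Real.exp (1/t))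
  simp only [spiralD1]
  field_simp
  linear_combination (t^2 + Real.exp (1/t)^2) * hsc

noncomputable def wfun (t : ℝ) : ℝ := t ^ 2 * expNegInvGlue (t / 2)

noncomputable def gfun (t : ℝ) : ℝ :=
  expNegInvGlue (t / 2) *
    ((1 + t * (3 + 3 * wfun t + wfun t ^ 2) / (1 + (1 + wfun t) * Real.sqrt (1 + wfun t))) /
      ((1 + wfun t) * Real.sqrt (1 + wfun t)))

lemma wfun_nonneg (t : ℝ) : 0 ≤ wfun t :=
  mul_nonneg (sq_nonneg t) (expNegInvGlue.nonneg _)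

open scoped ContDiff in
lemma gfun_contDiff : ContDiff ℝ ∞ gfun := by
  have hA : ContDiff ℝ ∞ (fun t : ℝ => expNegInvGlue (t / 2)) :=
    expNegInvGlue.contDiff.comp (contDiff_id.div_const 2)
  have hw : ContDiff ℝ ∞ wfun := (contDiff_id.pow 2).mul hA
  have h1w : ∀ t : ℝ, (0:ℝ) < 1 + wfun t := fun t => by
    have := wfun_nonneg t; linarith
  have hsq : ContDiff ℝ ∞ (fun t => Real.sqrt (1 + wfun t)) :=
    ContDiff.sqrt (contDiff_const.add hw) (fun t => (h1w t).ne')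
  have hsqpos : ∀ t : ℝ, 0 < Real.sqrt (1 + wfun t) := fun t => Real.sqrt_pos.2 (h1w t)
  have hden : ContDiff ℝ ∞ (fun t => (1 + wfun t) * Real.sqrt (1 + wfun t)) :=
    (contDiff_const.add hw).mul hsq
  have hdenpos : ∀ t : ℝ, 0 < (1 + wfun t) * Real.sqrt (1 + wfun t) := fun t =>
    mul_pos (h1w t) (hsqpos t)
  have hnum : ContDiff ℝ ∞ (fun t => 1 + t * (3 + 3 * wfun t + wfun t ^ 2) /
      (1 + (1 + wfun t) * Real.sqrt (1 + wfun t))) := by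
    refine contDiff_const.add (ContDiff.div (contDiff_id.mul ?_) (contDiff_const.add hden)
      (fun t => ?_))
    · exact (contDiff_const.add (contDiff_const.mul hw)).add (hw.pow 2)
    · have := hdenpos t; positivity
  exact hA.mul (hnum.div hden (fun t => (hdenpos t).ne'))

lemma spiralQ_eq {t : ℝ} (ht : 0 < t) : spiralQ t = gfun t - 1 / t := by
  have ht' : t ≠ 0 := ht.ne'
  have hEpos : (0:ℝ) < Real.exp (1/t) := Real.exp_pos _
  set E := Real.exp (1/t) with hEdef
  have hQ : spiralQ t = (E * (t - E^2) / t^4) / (Real.sqrt (1 + E^2/t^2))^3 := by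
    rw [spiralQ, deriv_spiral ht', deriv2_spiral ht', cross_eq ht']
    rw [euclNorm, normsq_eq ht']
  set A := expNegInvGlue (t/2) with hAdef
  have hAval : A = Real.exp (-(2/t)) := by
    rw [hAdef, expNegInvGlue]
    rw [if_neg (not_le.2 (by positivity : (0:ℝ) < t/2))]
    rw [inv_div]
  have hAE : A * E^2 = 1 := by
    rw [hAval, hEdef, pow_two, ← Real.exp_add, ← Real.exp_add,
      show -(2/t) + (1/t + 1/t) = 0 by ring, Real.exp_zero]
  set w := wfun t with hwdef
  have hw : w = t^2 * A := rfl
  have hw2 : E^2 * w = t^2 := by rw [hw]; linear_combination t^2 * hAE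
  have hwnn : 0 ≤ w := wfun_nonneg t
  set s := Real.sqrt (1 + w) with hsdef
  have hs2 : s^2 = 1 + w := Real.sq_sqrt (by linarith)
  have hspos : 0 < s := Real.sqrt_pos.2 (by linarith)
  have hEs : E^2 * s^2 = t^2 + E^2 := by linear_combination E^2 * hs2 + hw2
  have hnorm : Real.sqrt (1 + E^2/t^2) = E * s / t := by
    have h1 : (E * s / t)^2 = 1 + E^2/t^2 := by
      field_simp
      linear_combination hEs
    rw [← h1, Real.sqrt_sq (by positivity)]
  have h3 : (1 + w) * s = s^3 := by rw [← hs2]; ring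
  have hkey : E^2 * (s^6 - 1) = t^2 * (3 + 3*w + w^2) := by
    linear_combination (E^2*(s^4 + s^2*(1+w) + (1+w)^2)) * hs2 + (3 + 3*w + w^2) * hw2
  have main2 : (t - E^2 + E^2*s^3) * (1 + s^3)
      = t * E^2 * A * ((1 + s^3) + t*(3 + 3*w + w^2)) := by
    linear_combination hkey - (t*(1+s^3) + t^2*(3+3*w+w^2)) * hAE
  have h1s3 : (0:ℝ) < 1 + s^3 := by positivity
  rw [hQ, hnorm, gfun, ← hAdef, ← hwdef, ← hsdef, h3, eq_sub_iff_add_eq]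
  have hX : (E * (t - E^2) / t^4) / (E * s / t)^3 + 1/t
      = (t - E^2 + E^2*s^3) * (1 + s^3) / (t * E^2 * s^3 * (1 + s^3)) := by
    field_simp
  have hY : A * ((1 + t * (3 + 3*w + w^2) / (1 + s^3)) / s^3)
      = t * E^2 * A * ((1 + s^3) + t*(3 + 3*w + w^2)) / (t * E^2 * s^3 * (1 + s^3)) := by
    field_simp
  rw [hX, hY, main2]

lemma gfun_zero {t : ℝ} (ht : t ≤ 0) : gfun t = 0 := by
  rw [gfun, expNegInvGlue.zero_of_nonpos (by linarith : t/2 ≤ 0), zero_mul]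

lemma deriv_gfun_neg {t : ℝ} (ht : t < 0) : deriv gfun t = 0 := by
  have hev : gfun =ᶠ[nhds t] (fun _ => 0) := by
    filter_upwards [Iio_mem_nhds ht] with s hs
    exact gfun_zero hs.le
  rw [hev.deriv_eq, deriv_const]


/-- The function equal to `Q'(t) - 1/t²` for `t > 0` and to `0` for `t ≤ 0` is infinitely
differentiable. -/
theorem stmt_9 (G : ℝ → ℝ)
    (hG : ∀ t : ℝ, G t = if 0 < t then deriv spiralQ t - 1 / t ^ 2 else 0) :
    ContDiff ℝ (⊤ : ℕ∞) G := by
  have hg := gfun_contDiff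
  have hg' : ContDiff ℝ ∞ (deriv gfun) := (contDiff_infty_iff_deriv.mp hg).2
  have hGd : G = deriv gfun := by
    funext t
    rw [hG t]
    rcases lt_trichotomy t 0 with htn | rfl | htp
    · rw [if_neg (by linarith), deriv_gfun_neg htn]
    · rw [if_neg (lt_irrefl 0)]
      have h1 : Filter.Tendsto (deriv gfun) (nhdsWithin 0 (Set.Iio 0))
          (nhds (deriv gfun 0)) := (hg'.continuous.continuousAt).continuousWithinAt
      have h2 : Filter.Tendsto (deriv gfun) (nhdsWithin 0 (Set.Iio 0)) (nhds 0) := by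
        apply Filter.Tendsto.congr' _ tendsto_const_nhds
        filter_upwards [self_mem_nhdsWithin] with s hs
        exact (deriv_gfun_neg hs).symm
      exact (tendsto_nhds_unique h1 h2).symm
    · rw [if_pos htp]
      have hev : spiralQ =ᶠ[nhds t] (fun s => gfun s - 1/s) := by
        filter_upwards [Ioi_mem_nhds htp] with s hs
        exact spiralQ_eq hs
      have hinv : HasDerivAt (fun s : ℝ => 1/s) (-(t^2)⁻¹) t := by
        simpa [one_div] using hasDerivAt_inv htp.ne'
      have hgd : DifferentiableAt ℝ gfun t :=
        (hg.differentiable (by simp)).differentiableAt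
      rw [hev.deriv_eq, deriv_fun_sub hgd hinv.differentiableAt, hinv.deriv]
      rw [one_div (t^2)]
      ring
  rw [hGd]
  exact hg'
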